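/- Let p be an odd prime, d ≥ 1, l ∈ {0,1,...,d}, and let K, K' be integers with 0 ≤ K ≤ K' and p > 2K' + 1. Let δ > 0, let v ∈ F_p^d, and let X ⊆ v + [-K,K]^l × F_p^{d-l} be a nonempty finite set which is (K',δ)-thick in its affine hull U. Then the projection of U onto the first l coordinates is a single point; that is, each of the first l coordinate functions is constant on U. -/

import Mathlib

open Finset

/-- The interval `[-K, K] = {-K, ..., K}` regarded as a subset of `ZMod p`. -/
noncomputable def interval (p K : ℕ) : Finset (ZMod p) :=
  (Finset.Icc (-(K : ℤ)) (K : ℤ)).image (fun k : ℤ => (k : ZMod p))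

/-- The linear function `x ↦ a₀ + ∑ i, a i * x i` on `(ZMod p)^d`. -/
def linMap (p d : ℕ) (a₀ : ZMod p) (a : Fin d → ZMod p) (x : Fin d → ZMod p) : ZMod p :=
  a₀ + ∑ i, a i * x i

/-- A function is constant on a set. -/
def ConstOn {p d : ℕ} (f : (Fin d → ZMod p) → ZMod p) (S : Set (Fin d → ZMod p)) : Prop :=
  ∀ x ∈ S, ∀ y ∈ S, f x = f y

/-- A finite set `X ⊆ (ZMod p)^d` is `(K, δ)`-thick along the linear function `x ↦ a₀ + ∑ aᵢxᵢ`: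
at least `δ|X|` of its elements lie outside `H(ξ, K)`. -/
def IsThickAlong {p d : ℕ} (X : Finset (Fin d → ZMod p)) (a₀ : ZMod p)
    (a : Fin d → ZMod p) (K : ℕ) (δ : ℝ) : Prop :=
  δ * (X.card : ℝ) ≤ ((X.filter (fun x => linMap p d a₀ a x ∉ interval p K)).card : ℝ)

/-- Multiset version of `IsThickAlong`, cardinalities counted with multiplicity.  -/
def IsThickAlongM {p d : ℕ} (A : Multiset (Fin d → ZMod p)) (a₀ : ZMod p)
    (a : Fin d → ZMod p) (K : ℕ) (δ : ℝ) : Prop :=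
  δ * (Multiset.card A : ℝ) ≤
    (Multiset.card (A.filter (fun x => linMap p d a₀ a x ∉ interval p K)) : ℝ)

/-- A finite set is `(K, δ)`-thick in its affine hull: it is `(K, δ)`-thick along every
linear function which is not constant on the affine hull of `X`. -/
def IsThickInHull {p d : ℕ} (X : Finset (Fin d → ZMod p)) (K : ℕ) (δ : ℝ) : Prop :=
  ∀ (a₀ : ZMod p) (a : Fin d → ZMod p),
    ¬ ConstOn (linMap p d a₀ a)
        ((affineSpan (ZMod p) (X : Set (Fin d → ZMod p)) : AffineSubspace (ZMod p) (Fin d → ZMod p)) : Set (Fin d → ZMod p)) →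
    IsThickAlong X a₀ a K δ

/-- Multiset version of `IsThickInHull` (the affine hull of the support). -/
def IsThickInHullM {p d : ℕ} (X : Multiset (Fin d → ZMod p)) (K : ℕ) (δ : ℝ) : Prop :=
  ∀ (a₀ : ZMod p) (a : Fin d → ZMod p),
    ¬ ConstOn (linMap p d a₀ a)
        ((affineSpan (ZMod p) (↑X.toFinset : Set (Fin d → ZMod p)) : AffineSubspace (ZMod p) (Fin d → ZMod p)) : Set (Fin d → ZMod p)) →
    IsThickAlongM X a₀ a K δ

/-- A set `X ⊆ (ZMod p)^d` is `(K, K', δ)`-tubular: there are `l ∈ {0,…,d}` and an affine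
isomorphism `ψ` such that `ψX ⊆ [-K,K]^l × (ZMod p)^{d-l}` and `ψX` is `(K', δ)`-thick along
every linear function which is not constant on `{0} × (ZMod p)^{d-l}`. -/
def IsTubular {p d : ℕ} (X : Finset (Fin d → ZMod p)) (K K' : ℕ) (δ : ℝ) : Prop :=
  ∃ l ≤ d, ∃ ψ : (Fin d → ZMod p) ≃ᵃ[ZMod p] (Fin d → ZMod p),
    (∀ x ∈ X, ∀ i : Fin d, (i : ℕ) < l → ψ x i ∈ interval p K) ∧
    ∀ (a₀ : ZMod p) (a : Fin d → ZMod p),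
      ¬ ConstOn (linMap p d a₀ a) {x : Fin d → ZMod p | ∀ i : Fin d, (i : ℕ) < l → x i = 0} →
      IsThickAlong (X.image (fun x => ψ x)) a₀ a K' δ

/-- let `p` be an odd prime, `d ≥ 1`, `l ∈ {0,…,d}`, `0 ≤ K ≤ K'`,
`p > 2K' + 1`, `δ > 0`, `v ∈ 𝔽_p^d`, and let `X ⊆ v + [-K,K]^l × 𝔽_p^{d-l}` be a nonempty
finite set which is `(K', δ)`-thick in its affine hull `U`.  Then each of the first `l`
coordinate functions is constant on `U`, i.e. the projection of `U` onto the first `l`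
coordinates is a single point. -/
theorem projection_constant (p : ℕ) (hp : p.Prime) (hodd : Odd p)
    (d l K K' : ℕ) (hd : 1 ≤ d) (hl : l ≤ d) (hKK' : K ≤ K') (hpK : 2 * K' + 1 < p)
    (δ : ℝ) (hδ : 0 < δ) (v : Fin d → ZMod p)
    (X : Finset (Fin d → ZMod p)) (hX : X.Nonempty)
    (hbox : ∀ x ∈ X, ∀ i : Fin d, (i : ℕ) < l → x i - v i ∈ interval p K)
    (hthick : IsThickInHull X K' δ) :
    ∀ i : Fin d, (i : ℕ) < l →
      ∀ x ∈ affineSpan (ZMod p) (X : Set (Fin d → ZMod p)),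
        ∀ y ∈ affineSpan (ZMod p) (X : Set (Fin d → ZMod p)), x i = y i := by
  intro i hi x hx y hy
  set a : Fin d → ZMod p := fun j => if j = i then (1 : ZMod p) else 0 with ha
  have hlin : ∀ z, linMap p d (-(v i)) a z = z i - v i := by
    intro z
    simp [linMap, ha, ite_mul, Finset.sum_ite_eq']
    ring
  have hconst : ConstOn (linMap p d (-(v i)) a)
      ((affineSpan (ZMod p) (X : Set (Fin d → ZMod p)) : AffineSubspace (ZMod p) (Fin d → ZMod p)) : Set (Fin d → ZMod p)) := by
    by_contra hc
    have hthick' := hthick _ _ hc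
    have hsub : interval p K ⊆ interval p K' := by
      apply Finset.image_subset_image
      apply Finset.Icc_subset_Icc
      · simp; exact_mod_cast hKK'
      · exact_mod_cast hKK'
    have hempty : X.filter (fun z => linMap p d (-(v i)) a z ∉ interval p K') = ∅ := by
      apply Finset.filter_eq_empty_iff.mpr
      intro z hz hnot
      exact hnot (hsub (by rw [hlin]; exact hbox z hz i hi))
    rw [IsThickAlong, hempty] at hthick'
    simp only [Finset.card_empty, Nat.cast_zero] at hthick'
    have hc0 : (0:ℝ) < (X.card : ℝ) := by exact_mod_cast Finset.card_pos.mpr hX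
    nlinarith
  have h := hconst x hx y hy
  rw [hlin, hlin] at h
  exact sub_left_inj.mp h
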